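/- For the state discrimination problem between two density operators ρ₀ and ρ₁ given with equal prior probability 1/2, the optimal success probability over all two-outcome POVMs {E₀, E₁} satisfies max_{E₀+E₁=I, E_i ≥ 0} (1/2)(Tr ρ₀E₀ + Tr ρ₁E₁) = 1/2 + (1/4)‖ρ₀ − ρ₁‖₁. -/

import Mathlib

open Matrix
open scoped Matrix ComplexOrder

noncomputable section

/-- The trace norm `‖M‖₁ = Tr √(MᴴM)` of a complex matrix. -/
def traceNorm {n : Type*} [Fintype n] [DecidableEq n] (M : Matrix n n ℂ) : ℝ :=
  (((Matrix.posSemidef_conjTranspose_mul_self M).1.eigenvectorUnitary : Matrix n n ℂ) *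
    diagonal (((↑) : ℝ → ℂ) ∘ Real.sqrt ∘ (Matrix.posSemidef_conjTranspose_mul_self M).1.eigenvalues) *
    (star (Matrix.posSemidef_conjTranspose_mul_self M).1.eigenvectorUnitary : Matrix n n ℂ)).trace.re

namespace OSD

variable {n : Type*} [Fintype n] [DecidableEq n]

lemma psd_eq_ct (A : Matrix n n ℂ) (hA : A.PosSemidef) : ∃ C : Matrix n n ℂ, A = Cᴴ * C := by
  refine ⟨diagonal (fun i => ((Real.sqrt (hA.1.eigenvalues i) : ℝ) : ℂ)) *
    star (hA.1.eigenvectorUnitary : Matrix n n ℂ), ?_⟩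
  rw [conjTranspose_mul, diagonal_conjTranspose, ← star_eq_conjTranspose, star_star,
    Matrix.mul_assoc, ← Matrix.mul_assoc (diagonal _), diagonal_mul_diagonal]
  conv_lhs => rw [hA.1.spectral_theorem]
  rw [Unitary.conjStarAlgAut_apply, Matrix.mul_assoc]
  congr 3
  ext i
  simp only [Function.comp_apply, Pi.star_apply, RCLike.star_def, Complex.conj_ofReal]
  rw [← Complex.ofReal_mul, Real.mul_self_sqrt (hA.eigenvalues_nonneg i)]
  rfl

lemma psd_sqrt_unique (B X : Matrix n n ℂ) (hB : B.PosSemidef) (hX : B ^ 2 = X)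
    (hXh : X.IsHermitian) :
    B = (hXh.eigenvectorUnitary : Matrix n n ℂ) *
    diagonal (((↑) : ℝ → ℂ) ∘ Real.sqrt ∘ hXh.eigenvalues) *
    (star hXh.eigenvectorUnitary : Matrix n n ℂ) := by
  have e : (hXh.eigenvectorUnitary : Matrix n n ℂ) *
    diagonal (((↑) : ℝ → ℂ) ∘ Real.sqrt ∘ hXh.eigenvalues) *
    (star hXh.eigenvectorUnitary : Matrix n n ℂ) = cfc Real.sqrt X := by
    rw [hXh.cfc_eq]; rfl
  have hBs : IsSelfAdjoint B := hB.1
  rw [e, ← hX, ← cfc_comp_pow (hf := by fun_prop)]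
  rw [cfc_congr (g := id) (a := B)]
  · exact (cfc_id ℝ B).symm
  · intro x hx
    rw [hB.1.spectrum_real_eq_range_eigenvalues] at hx
    obtain ⟨i, rfl⟩ := hx
    simp [Real.sqrt_sq (hB.eigenvalues_nonneg i)]

omit [DecidableEq n] in
lemma trace_conjTranspose_mul_self_re_nonneg (M : Matrix n n ℂ) :
    0 ≤ ((Mᴴ * M).trace).re := by
  simp only [Matrix.trace, Matrix.diag_apply, Matrix.mul_apply, Matrix.conjTranspose_apply]
  rw [Complex.re_sum]
  refine Finset.sum_nonneg fun i _ => ?_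
  rw [Complex.re_sum]
  refine Finset.sum_nonneg fun j _ => ?_
  simp [Complex.mul_re]
  nlinarith [sq_nonneg (M j i).re, sq_nonneg (M j i).im]

omit [DecidableEq n] in
lemma trace_mul_psd_re_nonneg {A B : Matrix n n ℂ}
    (hA : A.PosSemidef) (hB : B.PosSemidef) : 0 ≤ ((A * B).trace).re := by
  obtain ⟨C, rfl⟩ := (by classical exact psd_eq_ct _ hA)
  obtain ⟨D, rfl⟩ := (by classical exact psd_eq_ct _ hB)
  have key : (Cᴴ * C * (Dᴴ * D)).trace = ((D * Cᴴ)ᴴ * (D * Cᴴ)).trace :=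
    calc (Cᴴ * C * (Dᴴ * D)).trace = (Cᴴ * (C * Dᴴ * D)).trace := by
          simp only [Matrix.mul_assoc]
      _ = ((C * Dᴴ * D) * Cᴴ).trace := Matrix.trace_mul_comm _ _
      _ = ((D * Cᴴ)ᴴ * (D * Cᴴ)).trace := by
          rw [Matrix.conjTranspose_mul, Matrix.conjTranspose_conjTranspose]
          simp only [Matrix.mul_assoc]
  rw [key]
  exact trace_conjTranspose_mul_self_re_nonneg _

lemma sandwich_mul {U D₁ D₂ : Matrix n n ℂ} (hU : star U * U = 1) :
    (U * D₁ * star U) * (U * D₂ * star U) = U * (D₁ * D₂) * star U := by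
  calc (U * D₁ * star U) * (U * D₂ * star U)
      = U * D₁ * (star U * U) * (D₂ * star U) := by simp only [Matrix.mul_assoc]
    _ = U * (D₁ * D₂) * star U := by rw [hU, Matrix.mul_one]; simp only [Matrix.mul_assoc]

/-- Functional calculus for a Hermitian matrix, packaged existentially. -/
lemma exists_calculus {A : Matrix n n ℂ} (hA : A.IsHermitian) :
    ∃ (lam : n → ℝ) (M : (ℝ → ℝ) → Matrix n n ℂ),
      M id = A ∧
      (∀ f g, M f * M g = M (fun t => f t * g t)) ∧
      (∀ f g, M f + M g = M (fun t => f t + g t)) ∧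
      (∀ f, (M f).trace = ((∑ i, f (lam i) : ℝ) : ℂ)) ∧
      (∀ f, (∀ t, 0 ≤ f t) → (M f).PosSemidef) ∧
      M (fun _ => 1) = 1 := by
  have hU1 : (hA.eigenvectorUnitary : Matrix n n ℂ) * star (hA.eigenvectorUnitary : Matrix n n ℂ)
      = 1 := Matrix.mem_unitaryGroup_iff.mp hA.eigenvectorUnitary.2
  have hU2 : star (hA.eigenvectorUnitary : Matrix n n ℂ) * (hA.eigenvectorUnitary : Matrix n n ℂ)
      = 1 := Matrix.mem_unitaryGroup_iff'.mp hA.eigenvectorUnitary.2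
  refine ⟨hA.eigenvalues,
    fun f => (hA.eigenvectorUnitary : Matrix n n ℂ) *
      Matrix.diagonal (fun i => (f (hA.eigenvalues i) : ℂ)) *
      star (hA.eigenvectorUnitary : Matrix n n ℂ), ?_, ?_, ?_, ?_, ?_, ?_⟩
  · exact hA.spectral_theorem.symm
  · intro f g
    dsimp only
    rw [sandwich_mul hU2, Matrix.diagonal_mul_diagonal]
    congr 2
    ext i
    push_cast
    ring
  · intro f g
    dsimp only
    rw [← Matrix.add_mul, ← Matrix.mul_add, Matrix.diagonal_add]
    congr 2
    ext i
    push_cast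
    ring
  · intro f
    dsimp only
    rw [Matrix.trace_mul_cycle, hU2, Matrix.one_mul, Matrix.trace_diagonal]
    push_cast
    ring
  · intro f hf
    dsimp only
    rw [Matrix.star_eq_conjTranspose]
    refine Matrix.PosSemidef.mul_mul_conjTranspose_same ?_ _
    refine Matrix.posSemidef_diagonal_iff.mpr fun i => ?_
    rw [Complex.zero_le_real]
    exact hf _
  · dsimp only
    simp only [Complex.ofReal_one, Matrix.diagonal_one, Matrix.mul_one]
    exact hU1

end OSD

open OSD

/-- Optimal success probability of discriminating two equiprobable
density matrices: `max (1/2)(Tr ρ₀E₀ + Tr ρ₁E₁) = 1/2 + (1/4)‖ρ₀ - ρ₁‖₁`, the maximum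
being over two-outcome POVMs `{E₀, E₁}`. -/
theorem optimal_state_discrimination (d : ℕ)
    (ρ₀ ρ₁ : Matrix (Fin d) (Fin d) ℂ)
    (h₀ : ρ₀.PosSemidef) (h₁ : ρ₁.PosSemidef)
    (ht₀ : ρ₀.trace = 1) (ht₁ : ρ₁.trace = 1) :
    IsGreatest
      {x : ℝ | ∃ E₀ E₁ : Matrix (Fin d) (Fin d) ℂ,
        E₀.PosSemidef ∧ E₁.PosSemidef ∧ E₀ + E₁ = 1 ∧
        x = (1 / 2) * ((ρ₀ * E₀).trace + (ρ₁ * E₁).trace).re}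
      (1 / 2 + (1 / 4) * traceNorm (ρ₀ - ρ₁)) := by
  classical
  have hΔ : (ρ₀ - ρ₁).IsHermitian := h₀.1.sub h₁.1
  obtain ⟨lam, Mf, Mid, Mmul, Madd, Mtrace, Mpsd, Mone⟩ := exists_calculus hΔ
  -- trace norm equals sum of |eigenvalues|
  have hAbs : Mf (fun t => |t|) =
      (((Matrix.posSemidef_conjTranspose_mul_self (ρ₀ - ρ₁)).1.eigenvectorUnitary :
        Matrix (Fin d) (Fin d) ℂ) *
      diagonal (((↑) : ℝ → ℂ) ∘ Real.sqrt ∘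
        (Matrix.posSemidef_conjTranspose_mul_self (ρ₀ - ρ₁)).1.eigenvalues) *
      (star (Matrix.posSemidef_conjTranspose_mul_self (ρ₀ - ρ₁)).1.eigenvectorUnitary :
        Matrix (Fin d) (Fin d) ℂ)) := by
    refine psd_sqrt_unique _ _ (Mpsd _ fun t => abs_nonneg t) ?_ _
    rw [pow_two, Mmul]
    have h1 : (fun t => |t| * |t|) = fun t => (id t : ℝ) * id t := by
      funext t; exact abs_mul_abs_self t
    rw [h1, ← Mmul, Mid, hΔ.eq]
  have htn : traceNorm (ρ₀ - ρ₁) = ∑ i, |lam i| := by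
    rw [traceNorm, ← hAbs, Mtrace]
    exact Complex.ofReal_re _
  -- trace (ρ₀ - ρ₁) = 0, hence sum of eigenvalues is 0
  have hsum0 : ∑ i, lam i = 0 := by
    have h1 : (ρ₀ - ρ₁).trace = 0 := by
      rw [Matrix.trace_sub, ht₀, ht₁, sub_self]
    rw [← Mid, Mtrace] at h1
    exact_mod_cast h1
  have hmaxsum : ∑ i, max (lam i) 0 = traceNorm (ρ₀ - ρ₁) / 2 := by
    rw [htn]
    have habs : ∀ t : ℝ, 2 * max t 0 = |t| + t := by
      intro t
      rcases le_total t 0 with h | h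
      · rw [max_eq_right h, abs_of_nonpos h]; ring
      · rw [max_eq_left h, abs_of_nonneg h]; ring
    have h2 : 2 * ∑ i, max (lam i) 0 = (∑ i, |lam i|) + ∑ i, lam i := by
      rw [Finset.mul_sum, ← Finset.sum_add_distrib]
      exact Finset.sum_congr rfl fun i _ => habs (lam i)
    rw [hsum0, add_zero] at h2
    linarith
  -- general success-probability identity
  have key : ∀ E₀ E₁ : Matrix (Fin d) (Fin d) ℂ, E₀ + E₁ = 1 →
      ((ρ₀ * E₀).trace + (ρ₁ * E₁).trace) = 1 + ((ρ₀ - ρ₁) * E₀).trace := by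
    intro E₀ E₁ hs
    have h1 : ρ₀ * E₀ = (ρ₀ - ρ₁) * E₀ + ρ₁ * E₀ := by noncomm_ring
    have h2 : (ρ₁ * E₀).trace + (ρ₁ * E₁).trace = (1 : ℂ) := by
      rw [← Matrix.trace_add, ← Matrix.mul_add, hs, Matrix.mul_one, ht₁]
    rw [h1, Matrix.trace_add, add_assoc, h2, add_comm]
  constructor
  · -- membership: optimal projective measurement
    have hone : (fun t : ℝ => (if 0 < t then (1:ℝ) else 0) + (1 - if 0 < t then (1:ℝ) else 0))
        = fun _ => (1 : ℝ) := by funext t; ring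
    have hEsum : Mf (fun t => if 0 < t then 1 else 0)
        + Mf (fun t => 1 - if 0 < t then 1 else 0) = 1 := by
      rw [Madd, hone, Mone]
    refine ⟨Mf (fun t => if 0 < t then 1 else 0),
      Mf (fun t => 1 - if 0 < t then 1 else 0), ?_, ?_, hEsum, ?_⟩
    · exact Mpsd _ fun t => by split_ifs <;> norm_num
    · exact Mpsd _ fun t => by split_ifs <;> norm_num
    · rw [key _ _ hEsum]
      have h3 : ((ρ₀ - ρ₁) * Mf (fun t => if 0 < t then 1 else 0)).trace
          = ((∑ i, max (lam i) 0 : ℝ) : ℂ) := by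
        rw [← Mid, Mmul, Mtrace]
        congr 1
        refine Finset.sum_congr rfl fun i _ => ?_
        dsimp only [id]
        rcases lt_or_ge 0 (lam i) with h | h
        · rw [if_pos h, max_eq_left h.le, mul_one]
        · rw [if_neg (not_lt.mpr h), max_eq_right h, mul_zero]
      rw [h3, hmaxsum]
      simp only [Complex.add_re, Complex.one_re, Complex.ofReal_re]
      ring
  · -- upper bound
    rintro x ⟨E₀, E₁, hE₀, hE₁, hs, rfl⟩
    rw [key _ _ hs]
    have hPpsd : (Mf (fun t => max t 0)).PosSemidef := Mpsd _ fun t => le_max_right _ _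
    have hNpsd : (Mf (fun t => max (-t) 0)).PosSemidef := Mpsd _ fun t => le_max_right _ _
    have hPN : Mf (fun t => max t 0) = (ρ₀ - ρ₁) + Mf (fun t => max (-t) 0) := by
      have hfun : (fun t : ℝ => max t 0) = fun t => id t + max (-t) 0 := by
        funext t
        dsimp only [id]
        rcases le_total t 0 with h | h
        · rw [max_eq_right h, max_eq_left (by linarith : (0:ℝ) ≤ -t)]; ring
        · rw [max_eq_left h, max_eq_right (by linarith : -t ≤ (0:ℝ))]; ring
      rw [hfun, ← Madd, Mid]
    have hΔE : (ρ₀ - ρ₁) * E₀ = Mf (fun t => max t 0) * E₀ - Mf (fun t => max (-t) 0) * E₀ := by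
      rw [hPN]; noncomm_ring
    have hPE : Mf (fun t => max t 0) * E₀ = Mf (fun t => max t 0)
        - Mf (fun t => max t 0) * E₁ := by
      have hE : E₀ = 1 - E₁ := eq_sub_of_add_eq hs
      rw [hE, Matrix.mul_sub, Matrix.mul_one]
    have hPtr : (Mf (fun t => max t 0)).trace.re = traceNorm (ρ₀ - ρ₁) / 2 := by
      rw [Mtrace, Complex.ofReal_re, hmaxsum]
    have h4 : (((ρ₀ - ρ₁) * E₀).trace).re ≤ traceNorm (ρ₀ - ρ₁) / 2 := by
      rw [hΔE, Matrix.trace_sub, Complex.sub_re]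
      have h5 : 0 ≤ ((Mf (fun t => max (-t) 0) * E₀).trace).re :=
        trace_mul_psd_re_nonneg hNpsd hE₀
      have h6 : 0 ≤ ((Mf (fun t => max t 0) * E₁).trace).re :=
        trace_mul_psd_re_nonneg hPpsd hE₁
      have h7 : ((Mf (fun t => max t 0) * E₀).trace).re
          = (Mf (fun t => max t 0)).trace.re - ((Mf (fun t => max t 0) * E₁).trace).re := by
        rw [hPE, Matrix.trace_sub, Complex.sub_re]
      rw [h7, hPtr]
      linarith
    have h8 : ((1 : ℂ) + ((ρ₀ - ρ₁) * E₀).trace).re = 1 + (((ρ₀ - ρ₁) * E₀).trace).re := by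
      simp [Complex.add_re]
    rw [h8]
    linarith
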